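/- Let P = {x ∈ ℝ^n : Ax ≤ b, 0 ≤ x_i ≤ u_i for i ∈ I} be a rational polytope with I = {1,…,l}. If ℬ = (B^1,…,B^l) and 𝒞 = (C^1,…,C^l) are two binarization schemes in which every component is a unimodular binarization polytope (B^i, C^i ∈ Γ^{u_i}_{u_i} unimodular), then proj_x(SC(P_ℬ, I_ℬ)) = proj_x(SC(P_𝒞, I_𝒞)). -/
import Mathlib


open Set

/-- The split closure of `P` with respect to a family `Λ` of (integral) linear
functionals: the intersection over all `f ∈ Λ` and all integers `c` of the convex
hull of `P` minus the split set `{x : c < f x < c + 1}`. -/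
noncomputable def splitClosure {E : Type*} [AddCommGroup E] [Module ℝ E]
    (Λ : Set (E → ℝ)) (P : Set E) : Set E :=
  ⋂ f ∈ Λ, ⋂ c : ℤ, convexHull ℝ (P \ {x | (c : ℝ) < f x ∧ f x < c + 1})

/-- A rational polytope in `ℝ × ℝ^q`: the convex hull of finitely many rational points. -/
def IsRatPolytopeBin (q : ℕ) (B : Set (ℝ × (Fin q → ℝ))) : Prop :=
  ∃ V : Finset (ℝ × (Fin q → ℝ)),
    (∀ p ∈ V, (∃ r : ℚ, p.1 = (r : ℝ)) ∧ ∀ j, ∃ r : ℚ, p.2 j = (r : ℝ)) ∧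
    B = convexHull ℝ (V : Set (ℝ × (Fin q → ℝ)))

/-- `B ∈ Γ^q_u`: a binarization polytope for a variable `x ∈ {0,…,u}` using `q` binary
variables: a rational polytope contained in `[0,u] × [0,1]^q` whose set of 0-1 points
projects (in the `x` coordinate) exactly onto `{0,1,…,u}`. -/
def IsBinPoly (u q : ℕ) (B : Set (ℝ × (Fin q → ℝ))) : Prop :=
  IsRatPolytopeBin q B ∧
  (∀ p ∈ B, 0 ≤ p.1 ∧ p.1 ≤ (u : ℝ) ∧ ∀ j, 0 ≤ p.2 j ∧ p.2 j ≤ 1) ∧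
  Prod.fst '' (B ∩ {p | ∀ j, p.2 j = 0 ∨ p.2 j = 1}) = {x : ℝ | ∃ k : ℕ, k ≤ u ∧ x = (k : ℝ)}

/-- A unimodular binarization polytope `B ∈ Γ^u_u`: a perfect binarization polytope
`B = conv{(j, w^j) : j = 0,…,u}` with `w^j ∈ {0,1}^u` such that the `u × u` matrix
with columns `w^j - w^0`, `j = 1,…,u`, is unimodular (integral with determinant `±1`). -/
def IsUnimodularBin (u : ℕ) (B : Set (ℝ × (Fin u → ℝ))) : Prop :=
  IsBinPoly u u B ∧
  ∃ w : Fin (u + 1) → Fin u → ℝ,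
    (∀ j i, w j i = 0 ∨ w j i = 1) ∧
    B = convexHull ℝ {p : ℝ × (Fin u → ℝ) | ∃ j : Fin (u + 1), p = (((j : ℕ) : ℝ), w j)} ∧
    ∃ N : Matrix (Fin u) (Fin u) ℤ,
      (∀ i j : Fin u, (N i j : ℝ) = w j.succ i - w 0 i) ∧ (N.det = 1 ∨ N.det = -1)

/-- The binary extended formulation `P_ℬ ⊆ ℝ^n × ℝ^{q₁} × ⋯ × ℝ^{q_l}` associated with a
binarization scheme `ℬ = (B^1,…,B^l)`: the set of `(x,z)` with `x ∈ P` and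
`(x_i, z_i) ∈ B^i` for each `i ∈ I = {1,…,l}`. -/
def extForm {n l : ℕ} (hln : l ≤ n) {q : Fin l → ℕ} (P : Set (Fin n → ℝ))
    (B : (i : Fin l) → Set (ℝ × (Fin (q i) → ℝ))) :
    Set ((Fin n → ℝ) × ((i : Fin l) → Fin (q i) → ℝ)) :=
  {p | p.1 ∈ P ∧ ∀ i : Fin l, (p.1 (Fin.castLE hln i), p.2 i) ∈ B i}

/-- The family of split functionals on the extended space corresponding to the index set
`I_ℬ = {1,…,l} ∪ {n+1,…,n+q}`: integer coefficients on `x_1,…,x_l` and on all of the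
binarization variables `z`, zero coefficients on `x_{l+1},…,x_n`. -/
def extSplits (n l : ℕ) (hln : l ≤ n) (q : Fin l → ℕ) :
    Set (((Fin n → ℝ) × ((i : Fin l) → Fin (q i) → ℝ)) → ℝ) :=
  {f | ∃ (π : Fin l → ℤ) (c : (i : Fin l) → Fin (q i) → ℤ),
    f = fun p => (∑ i, (π i : ℝ) * p.1 (Fin.castLE hln i)) +
      ∑ i, ∑ j, (c i j : ℝ) * p.2 i j}


/-- Core computation: composing two integral affine maps whose matrices/offsets are
mutually inverse gives the identity, coordinatewise over ℝ. -/
lemma vec_comp {u : ℕ} (K K' : Matrix (Fin u) (Fin u) ℤ) (t t' : Fin u → ℤ)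
    (hK : K * K' = 1) (ht : t + K.mulVec t' = 0) (z : Fin u → ℝ) (j : Fin u) :
    (t j : ℝ) + ∑ k, (K j k : ℝ) * ((t' k : ℝ) + ∑ m, (K' k m : ℝ) * z m) = z j := by
  have htj : (t j : ℝ) + ∑ k, (K j k : ℝ) * (t' k : ℝ) = 0 := by
    have h := congrFun ht j
    simp only [Pi.add_apply, Matrix.mulVec, dotProduct, Pi.zero_apply] at h
    have : ((t j + ∑ x : Fin u, K j x * t' x : ℤ) : ℝ) = 0 := by rw [h]; simp
    push_cast at this
    linarith [this]
  have hKm : ∀ m, (∑ k, (K j k : ℝ) * (K' k m : ℝ)) = if j = m then 1 else 0 := by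
    intro m
    have h := congrFun (congrFun hK j) m
    rw [Matrix.mul_apply, Matrix.one_apply] at h
    have h2 : ((∑ k, K j k * K' k m : ℤ) : ℝ) = ((if j = m then 1 else 0 : ℤ) : ℝ) := by
      rw [h]
    push_cast at h2
    rw [← h2]
  have e1 : ∀ k : Fin u, (K j k : ℝ) * ((t' k : ℝ) + ∑ m, (K' k m : ℝ) * z m)
      = (K j k : ℝ) * (t' k : ℝ) + ∑ m, (K j k : ℝ) * (K' k m : ℝ) * z m := by
    intro k; rw [mul_add, Finset.mul_sum]; ring_nf
  calc (t j : ℝ) + ∑ k, (K j k : ℝ) * ((t' k : ℝ) + ∑ m, (K' k m : ℝ) * z m)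
      = ((t j : ℝ) + ∑ k, (K j k : ℝ) * (t' k : ℝ))
        + ∑ m, (∑ k, (K j k : ℝ) * (K' k m : ℝ)) * z m := by
        rw [Finset.sum_congr rfl fun k _ => e1 k, Finset.sum_add_distrib, Finset.sum_comm]
        simp only [Finset.sum_mul]
        ring
    _ = ∑ m, (if j = m then 1 else 0) * z m := by
        rw [htj, Finset.sum_congr rfl fun m _ => by rw [hKm m]]; ring
    _ = z j := by simp

/-- Linear part of the integral block map on the extended space. -/
noncomputable def linZ (n l : ℕ) (u : Fin l → ℕ) (K : ∀ i, Matrix (Fin (u i)) (Fin (u i)) ℤ) :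
    ((Fin n → ℝ) × ((i : Fin l) → Fin (u i) → ℝ)) →ₗ[ℝ]
      ((Fin n → ℝ) × ((i : Fin l) → Fin (u i) → ℝ)) where
  toFun p := (p.1, fun i j => ∑ k, (K i j k : ℝ) * p.2 i k)
  map_add' p q := by
    refine Prod.ext rfl ?_
    funext i j
    simp [mul_add, Finset.sum_add_distrib]
  map_smul' c p := by
    refine Prod.ext rfl ?_
    funext i j
    simp [Finset.mul_sum]
    exact Finset.sum_congr rfl fun k _ => by ring

/-- The integral affine block map `(x,z) ↦ (x, (tᵢ + Kᵢ zᵢ)ᵢ)` on the extended space. -/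
noncomputable def affZ (n l : ℕ) (u : Fin l → ℕ) (K : ∀ i, Matrix (Fin (u i)) (Fin (u i)) ℤ)
    (t : ∀ i, Fin (u i) → ℤ) :
    ((Fin n → ℝ) × ((i : Fin l) → Fin (u i) → ℝ)) →ᵃ[ℝ]
      ((Fin n → ℝ) × ((i : Fin l) → Fin (u i) → ℝ)) where
  toFun p := (p.1, fun i j => (t i j : ℝ) + ∑ k, (K i j k : ℝ) * p.2 i k)
  linear := linZ n l u K
  map_vadd' p v := by
    refine Prod.ext rfl ?_
    funext i j
    show (t i j : ℝ) + ∑ k, (K i j k : ℝ) * (v.2 i k + p.2 i k)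
      = (∑ k, (K i j k : ℝ) * v.2 i k) + ((t i j : ℝ) + ∑ k, (K i j k : ℝ) * p.2 i k)
    simp [mul_add, Finset.sum_add_distrib]
    ring

lemma affZ_apply (n l : ℕ) (u : Fin l → ℕ) (K : ∀ i, Matrix (Fin (u i)) (Fin (u i)) ℤ)
    (t : ∀ i, Fin (u i) → ℤ) (p) :
    affZ n l u K t p = (p.1, fun i j => (t i j : ℝ) + ∑ k, (K i j k : ℝ) * p.2 i k) := rfl

lemma affZ_comp (n l : ℕ) (u : Fin l → ℕ) (K K' : ∀ i, Matrix (Fin (u i)) (Fin (u i)) ℤ)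
    (t t' : ∀ i, Fin (u i) → ℤ) (hK : ∀ i, K i * K' i = 1)
    (ht : ∀ i, t i + (K i).mulVec (t' i) = 0) (p) :
    affZ n l u K t (affZ n l u K' t' p) = p := by
  refine Prod.ext rfl ?_
  show (fun i j => (t i j : ℝ) + ∑ k, (K i j k : ℝ) *
      ((t' i k : ℝ) + ∑ m, (K' i k m : ℝ) * p.2 i m)) = p.2
  funext i j
  exact vec_comp (K i) (K' i) (t i) (t' i) (hK i) (ht i) (p.2 i) j

/-- The analogous affine map on a single slice `ℝ × ℝ^u` (identity on the first factor). -/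
noncomputable def sLin (u : ℕ) (K : Matrix (Fin u) (Fin u) ℤ) :
    (ℝ × (Fin u → ℝ)) →ₗ[ℝ] (ℝ × (Fin u → ℝ)) where
  toFun p := (p.1, fun j => ∑ k, (K j k : ℝ) * p.2 k)
  map_add' p q := by
    refine Prod.ext rfl ?_
    funext j
    simp [mul_add, Finset.sum_add_distrib]
  map_smul' c p := by
    refine Prod.ext rfl ?_
    funext j
    simp [Finset.mul_sum]
    exact Finset.sum_congr rfl fun k _ => by ring

noncomputable def sAff (u : ℕ) (K : Matrix (Fin u) (Fin u) ℤ) (t : Fin u → ℤ) :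
    (ℝ × (Fin u → ℝ)) →ᵃ[ℝ] (ℝ × (Fin u → ℝ)) where
  toFun p := (p.1, fun j => (t j : ℝ) + ∑ k, (K j k : ℝ) * p.2 k)
  linear := sLin u K
  map_vadd' p v := by
    refine Prod.ext rfl ?_
    funext j
    show (t j : ℝ) + ∑ k, (K j k : ℝ) * (v.2 k + p.2 k)
      = (∑ k, (K j k : ℝ) * v.2 k) + ((t j : ℝ) + ∑ k, (K j k : ℝ) * p.2 k)
    simp [mul_add, Finset.sum_add_distrib]
    ring

lemma sAff_comp (u : ℕ) (K K' : Matrix (Fin u) (Fin u) ℤ) (t t' : Fin u → ℤ)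
    (hK : K * K' = 1) (ht : t + K.mulVec t' = 0) (p) :
    sAff u K t (sAff u K' t' p) = p := by
  refine Prod.ext rfl ?_
  show (fun j => (t j : ℝ) + ∑ k, (K j k : ℝ) *
      ((t' k : ℝ) + ∑ m, (K' k m : ℝ) * p.2 m)) = p.2
  funext j
  exact vec_comp K K' t t' hK ht p.2 j

lemma sc_image_subset {E : Type*} [AddCommGroup E] [Module ℝ E]
    (f : E →ᵃ[ℝ] E) (Λ : Set (E → ℝ))
    (hΛ : ∀ φ ∈ Λ, ∃ ψ ∈ Λ, ∃ D : ℤ, ∀ p, φ (f p) = ψ p + (D : ℝ))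
    (Q : Set E) : ⇑f '' splitClosure Λ Q ⊆ splitClosure Λ (⇑f '' Q) := by
  rintro _ ⟨x, hx, rfl⟩
  simp only [splitClosure, mem_iInter] at hx ⊢
  intro φ hφ c
  obtain ⟨ψ, hψ, D, hD⟩ := hΛ φ hφ
  have hx' := hx ψ hψ (c - D)
  have hsub : ⇑f '' (Q \ {x | ((c - D : ℤ) : ℝ) < ψ x ∧ ψ x < (c - D : ℤ) + 1})
      ⊆ (⇑f '' Q) \ {x | (c : ℝ) < φ x ∧ φ x < c + 1} := by
    rintro _ ⟨q, ⟨hqQ, hqS⟩, rfl⟩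
    refine ⟨mem_image_of_mem _ hqQ, fun hc => hqS ?_⟩
    have h1 := hc.1
    have h2 := hc.2
    rw [hD q] at h1 h2
    constructor <;> push_cast <;> linarith
  exact convexHull_mono hsub
    (by rw [← AffineMap.image_convexHull]; exact mem_image_of_mem _ hx')

lemma sc_image_eq {E : Type*} [AddCommGroup E] [Module ℝ E]
    (f g : E →ᵃ[ℝ] E) (hfg : ∀ p, f (g p) = p) (hgf : ∀ p, g (f p) = p)
    (Λ : Set (E → ℝ))
    (hf : ∀ φ ∈ Λ, ∃ ψ ∈ Λ, ∃ D : ℤ, ∀ p, φ (f p) = ψ p + (D : ℝ))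
    (hg : ∀ φ ∈ Λ, ∃ ψ ∈ Λ, ∃ D : ℤ, ∀ p, φ (g p) = ψ p + (D : ℝ))
    (Q : Set E) : ⇑f '' splitClosure Λ Q = splitClosure Λ (⇑f '' Q) := by
  refine Subset.antisymm (sc_image_subset f Λ hf Q) ?_
  have h1 := sc_image_subset g Λ hg (⇑f '' Q)
  have h2 : ⇑g '' (⇑f '' Q) = Q := by
    rw [← image_comp]
    have : ⇑g ∘ ⇑f = id := funext hgf
    rw [this, image_id]
  rw [h2] at h1
  intro y hy
  exact ⟨g y, h1 (mem_image_of_mem _ hy), hfg y⟩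

lemma extSplits_comp (n l : ℕ) (hln : l ≤ n) (u : Fin l → ℕ)
    (K : ∀ i, Matrix (Fin (u i)) (Fin (u i)) ℤ) (t : ∀ i, Fin (u i) → ℤ) :
    ∀ g ∈ extSplits n l hln u, ∃ g' ∈ extSplits n l hln u, ∃ D : ℤ,
      ∀ p, g (affZ n l u K t p) = g' p + (D : ℝ) := by
  rintro g ⟨π, c, rfl⟩
  refine ⟨fun p => (∑ i, (π i : ℝ) * p.1 (Fin.castLE hln i)) +
      ∑ i, ∑ j, (((∑ r, c i r * K i r j : ℤ)) : ℝ) * p.2 i j,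
    ⟨π, fun i j => ∑ r, c i r * K i r j, rfl⟩,
    ∑ i, ∑ j, c i j * t i j, fun p => ?_⟩
  show (∑ i, (π i : ℝ) * p.1 (Fin.castLE hln i)) +
      (∑ i, ∑ j, (c i j : ℝ) * ((t i j : ℝ) + ∑ k, (K i j k : ℝ) * p.2 i k)) = _
  push_cast
  have key : ∀ i, ∑ j, (c i j : ℝ) * ((t i j : ℝ) + ∑ k, (K i j k : ℝ) * p.2 i k)
      = (∑ j, (∑ r, (c i r : ℝ) * (K i r j : ℝ)) * p.2 i j)
        + ∑ j, (c i j : ℝ) * (t i j : ℝ) := by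
    intro i
    have e1 : ∀ j, (c i j : ℝ) * ((t i j : ℝ) + ∑ k, (K i j k : ℝ) * p.2 i k)
        = (c i j : ℝ) * (t i j : ℝ) + ∑ k, (c i j : ℝ) * (K i j k : ℝ) * p.2 i k := by
      intro j; rw [mul_add, Finset.mul_sum]; ring_nf
    rw [Finset.sum_congr rfl fun j _ => e1 j, Finset.sum_add_distrib, Finset.sum_comm]
    simp only [Finset.sum_mul]
    ring
  rw [Finset.sum_congr rfl fun i _ => key i, Finset.sum_add_distrib]
  ring

lemma unimod_inv {d : ℕ} (M : Matrix (Fin d) (Fin d) ℤ) (h : M.det = 1 ∨ M.det = -1) :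
    M * (M.det • M.adjugate) = 1 ∧ (M.det • M.adjugate) * M = 1 := by
  have h2 : M.det * M.det = 1 := by rcases h with h | h <;> rw [h] <;> ring
  constructor
  · rw [Matrix.mul_smul, Matrix.mul_adjugate, smul_smul, h2, one_smul]
  · rw [Matrix.smul_mul, Matrix.adjugate_mul, smul_smul, h2, one_smul]

lemma slice_mem_iff (u : ℕ) (K K' : Matrix (Fin u) (Fin u) ℤ) (t t' : Fin u → ℤ)
    (hK' : K' * K = 1) (ht' : t' + K'.mulVec t = 0)
    (wB wC : Fin (u + 1) → Fin u → ℝ)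
    (hvert : ∀ j r, (t r : ℝ) + ∑ k, (K r k : ℝ) * wC j k = wB j r)
    (a : ℝ) (z : Fin u → ℝ) :
    (a, z) ∈ convexHull ℝ {p : ℝ × (Fin u → ℝ) | ∃ j : Fin (u + 1), p = (((j : ℕ) : ℝ), wC j)} ↔
    (a, fun r => (t r : ℝ) + ∑ k, (K r k : ℝ) * z k) ∈
      convexHull ℝ {p : ℝ × (Fin u → ℝ) | ∃ j : Fin (u + 1), p = (((j : ℕ) : ℝ), wB j)} := by
  have hsetC : {p : ℝ × (Fin u → ℝ) | ∃ j : Fin (u + 1), p = (((j : ℕ) : ℝ), wC j)}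
      = Set.range (fun j : Fin (u + 1) => ((((j : ℕ) : ℝ), wC j) : ℝ × (Fin u → ℝ))) := by
    ext p; exact ⟨fun ⟨j, h⟩ => ⟨j, h.symm⟩, fun ⟨j, h⟩ => ⟨j, h.symm⟩⟩
  have hsetB : {p : ℝ × (Fin u → ℝ) | ∃ j : Fin (u + 1), p = (((j : ℕ) : ℝ), wB j)}
      = Set.range (fun j : Fin (u + 1) => ((((j : ℕ) : ℝ), wB j) : ℝ × (Fin u → ℝ))) := by
    ext p; exact ⟨fun ⟨j, h⟩ => ⟨j, h.symm⟩, fun ⟨j, h⟩ => ⟨j, h.symm⟩⟩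
  have himg : ⇑(sAff u K t) '' convexHull ℝ
        {p : ℝ × (Fin u → ℝ) | ∃ j : Fin (u + 1), p = (((j : ℕ) : ℝ), wC j)}
      = convexHull ℝ {p : ℝ × (Fin u → ℝ) | ∃ j : Fin (u + 1), p = (((j : ℕ) : ℝ), wB j)} := by
    rw [hsetC, hsetB, AffineMap.image_convexHull, ← Set.range_comp]
    have hfun : ⇑(sAff u K t) ∘ (fun j : Fin (u + 1) => ((((j : ℕ) : ℝ), wC j) : ℝ × (Fin u → ℝ)))
        = fun j : Fin (u + 1) => ((((j : ℕ) : ℝ), wB j) : ℝ × (Fin u → ℝ)) := by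
      funext j
      refine Prod.ext rfl ?_
      funext r
      exact hvert j r
    rw [hfun]
  constructor
  · intro h
    have := mem_image_of_mem (⇑(sAff u K t)) h
    rw [himg] at this
    exact this
  · intro h
    rw [← himg] at h
    obtain ⟨q, hq, he⟩ := h
    have hq' : q = (a, z) := by
      calc q = sAff u K' t' (sAff u K t q) := (sAff_comp u K' K t' t hK' ht' q).symm
        _ = sAff u K' t' (a, fun r => (t r : ℝ) + ∑ k, (K r k : ℝ) * z k) := by rw [he]
        _ = sAff u K' t' (sAff u K t (a, z)) := rfl
        _ = (a, z) := sAff_comp u K' K t' t hK' ht' (a, z)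
    rwa [hq'] at hq

/-- Let `P = {x ∈ ℝ^n : Ax ≤ b, 0 ≤ x_i ≤ u_i for i ∈ I}` be a
rational polytope with `I = {1,…,l}`.  If `ℬ = (B^1,…,B^l)` and `𝒞 = (C^1,…,C^l)` are
two binarization schemes all of whose components are unimodular binarization polytopes
in `Γ^{u_i}_{u_i}`, then `proj_x(SC(P_ℬ, I_ℬ)) = proj_x(SC(P_𝒞, I_𝒞))`. -/
theorem stmt3 (n l m : ℕ) (hln : l ≤ n)
    (A : Fin m → Fin n → ℚ) (b : Fin m → ℚ) (u : Fin l → ℕ) (hu : ∀ i, 0 < u i)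
    (P : Set (Fin n → ℝ))
    (hP : P = {x | (∀ r, ∑ j, (A r j : ℝ) * x j ≤ (b r : ℝ)) ∧
      ∀ i : Fin l, 0 ≤ x (Fin.castLE hln i) ∧ x (Fin.castLE hln i) ≤ (u i : ℝ)})
    (hPbdd : Bornology.IsBounded P)
    (B : (i : Fin l) → Set (ℝ × (Fin (u i) → ℝ)))
    (hB : ∀ i, IsUnimodularBin (u i) (B i))
    (C : (i : Fin l) → Set (ℝ × (Fin (u i) → ℝ)))
    (hC : ∀ i, IsUnimodularBin (u i) (C i)) :
    Prod.fst '' (splitClosure (extSplits n l hln (fun i => u i)) (extForm hln P B)) =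
      Prod.fst '' (splitClosure (extSplits n l hln (fun i => u i)) (extForm hln P C)) := by
  classical
  choose wB hwB01 hBeq NB hNB hNBdet using fun i => (hB i).2
  choose wC hwC01 hCeq NC hNC hNCdet using fun i => (hC i).2
  -- integral inverse data coming from unimodularity
  have hNBinv := fun i => unimod_inv (NB i) (hNBdet i)
  have hNCinv := fun i => unimod_inv (NC i) (hNCdet i)
  let KB : ∀ i, Matrix (Fin (u i)) (Fin (u i)) ℤ :=
    fun i => NB i * ((NC i).det • (NC i).adjugate)
  let KC : ∀ i, Matrix (Fin (u i)) (Fin (u i)) ℤ :=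
    fun i => NC i * ((NB i).det • (NB i).adjugate)
  have hKBC : ∀ i, KB i * KC i = 1 := by
    intro i
    show NB i * ((NC i).det • (NC i).adjugate) * (NC i * ((NB i).det • (NB i).adjugate)) = 1
    rw [mul_assoc, ← mul_assoc ((NC i).det • (NC i).adjugate), (hNCinv i).2, one_mul,
      (hNBinv i).1]
  have hKCB : ∀ i, KC i * KB i = 1 := by
    intro i
    show NC i * ((NB i).det • (NB i).adjugate) * (NB i * ((NC i).det • (NC i).adjugate)) = 1
    rw [mul_assoc, ← mul_assoc ((NB i).det • (NB i).adjugate), (hNBinv i).2, one_mul,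
      (hNCinv i).1]
  have hKB_NC : ∀ i, KB i * NC i = NB i := by
    intro i
    show NB i * ((NC i).det • (NC i).adjugate) * NC i = NB i
    rw [mul_assoc, (hNCinv i).2, mul_one]
  -- integral versions of the 0/1 base vertices
  let bB : ∀ i, Fin (u i) → ℤ := fun i j => if wB i 0 j = 1 then 1 else 0
  let bC : ∀ i, Fin (u i) → ℤ := fun i j => if wC i 0 j = 1 then 1 else 0
  have hbB : ∀ i j, ((bB i j : ℤ) : ℝ) = wB i 0 j := by
    intro i j
    by_cases hc : wB i 0 j = 1
    · simp [bB, hc]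
    · rcases hwB01 i 0 j with h | h
      · simp [bB, hc, h]
      · exact absurd h hc
  have hbC : ∀ i j, ((bC i j : ℤ) : ℝ) = wC i 0 j := by
    intro i j
    by_cases hc : wC i 0 j = 1
    · simp [bC, hc]
    · rcases hwC01 i 0 j with h | h
      · simp [bC, hc, h]
      · exact absurd h hc
  -- integral offsets
  let tB : ∀ i, Fin (u i) → ℤ := fun i => bB i - (KB i).mulVec (bC i)
  let tC : ∀ i, Fin (u i) → ℤ := fun i => bC i - (KC i).mulVec (bB i)
  have htBC : ∀ i, tB i + (KB i).mulVec (tC i) = 0 := by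
    intro i
    show bB i - (KB i).mulVec (bC i) + (KB i).mulVec (bC i - (KC i).mulVec (bB i)) = 0
    rw [Matrix.mulVec_sub, Matrix.mulVec_mulVec, hKBC i, Matrix.one_mulVec]
    abel
  have htCB : ∀ i, tC i + (KC i).mulVec (tB i) = 0 := by
    intro i
    show bC i - (KC i).mulVec (bB i) + (KC i).mulVec (bB i - (KB i).mulVec (bC i)) = 0
    rw [Matrix.mulVec_sub, Matrix.mulVec_mulVec, hKCB i, Matrix.one_mulVec]
    abel
  -- the map sends C-vertices to B-vertices
  have hvertB : ∀ i (j : Fin (u i + 1)) (r : Fin (u i)),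
      (tB i r : ℝ) + ∑ k, (KB i r k : ℝ) * wC i j k = wB i j r := by
    intro i j r
    have htb : (tB i r : ℝ) = wB i 0 r - ∑ k, (KB i r k : ℝ) * wC i 0 k := by
      show ((bB i r - ∑ k, KB i r k * bC i k : ℤ) : ℝ) = _
      push_cast
      rw [hbB]
      congr 1
      exact Finset.sum_congr rfl fun k _ => by rw [hbC]
    induction j using Fin.cases with
    | zero => rw [htb]; ring
    | succ m =>
      have hcol : ∑ k, (KB i r k : ℝ) * (wC i m.succ k - wC i 0 k)
          = wB i m.succ r - wB i 0 r := by
        calc ∑ k, (KB i r k : ℝ) * (wC i m.succ k - wC i 0 k)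
            = ∑ k, (KB i r k : ℝ) * (NC i k m : ℝ) :=
              Finset.sum_congr rfl fun k _ => by rw [← hNC i k m]
          _ = (((KB i * NC i) r m : ℤ) : ℝ) := by rw [Matrix.mul_apply]; push_cast; ring
          _ = ((NB i r m : ℤ) : ℝ) := by rw [hKB_NC i]
          _ = wB i m.succ r - wB i 0 r := hNB i r m
      have expand : ∑ k, (KB i r k : ℝ) * wC i m.succ k
          = (∑ k, (KB i r k : ℝ) * wC i 0 k)
            + ∑ k, (KB i r k : ℝ) * (wC i m.succ k - wC i 0 k) := by
        rw [← Finset.sum_add_distrib]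
        exact Finset.sum_congr rfl fun k _ => by ring
      rw [htb, expand, hcol]; ring
  -- slice membership transfer
  have hslice : ∀ i (a : ℝ) (z : Fin (u i) → ℝ),
      (a, z) ∈ C i ↔
      (a, fun r => (tB i r : ℝ) + ∑ k, (KB i r k : ℝ) * z k) ∈ B i := by
    intro i a z
    rw [hCeq i, hBeq i]
    exact slice_mem_iff (u i) (KB i) (KC i) (tB i) (tC i) (hKCB i) (htCB i)
      (wB i) (wC i) (hvertB i) a z
  -- the global affine maps
  set Φ := affZ n l (fun i => u i) KB tB with hΦdef
  set Ψ := affZ n l (fun i => u i) KC tC with hΨdef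
  have hΦΨ : ∀ p, Φ (Ψ p) = p :=
    affZ_comp n l (fun i => u i) KB KC tB tC hKBC htBC
  have hΨΦ : ∀ p, Ψ (Φ p) = p :=
    affZ_comp n l (fun i => u i) KC KB tC tB hKCB htCB
  have himg : ⇑Φ '' extForm hln P C = extForm hln P B := by
    ext p
    constructor
    · rintro ⟨q, ⟨hq1, hq2⟩, rfl⟩
      exact ⟨hq1, fun i => (hslice i (q.1 (Fin.castLE hln i)) (q.2 i)).mp (hq2 i)⟩
    · rintro ⟨hp1, hp2⟩
      refine ⟨Ψ p, ⟨hp1, fun i => ?_⟩, hΦΨ p⟩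
      have h := hslice i (p.1 (Fin.castLE hln i)) ((Ψ p).2 i)
      have hz : (fun r => (tB i r : ℝ) + ∑ k, (KB i r k : ℝ) * (Ψ p).2 i k) = p.2 i := by
        funext r
        exact vec_comp (KB i) (KC i) (tB i) (tC i) (hKBC i) (htBC i) (p.2 i) r
      rw [hz] at h
      exact h.mpr (hp2 i)
  have hsc : ⇑Φ '' splitClosure (extSplits n l hln (fun i => u i)) (extForm hln P C)
      = splitClosure (extSplits n l hln (fun i => u i)) (⇑Φ '' extForm hln P C) :=
    sc_image_eq Φ Ψ hΦΨ hΨΦ _ (extSplits_comp n l hln (fun i => u i) KB tB)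
      (extSplits_comp n l hln (fun i => u i) KC tC) _
  rw [← himg, ← hsc, ← image_comp]
  rfl
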